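/- Let (X₁,d₁), (X₂,d₂) be distance spaces with X₁ ∩ X₂ = {x₀} and let d be their 1-sum. If d₁ and d₂ are both of negative type on X₁ and X₂ respectively, then d is of negative type on X₁ ∪ X₂: for all points u₁,…,uₙ ∈ X₁ ∪ X₂ and reals c₁,…,cₙ with ∑ cₖ = 0, ∑_{i,j} cᵢ cⱼ d(uᵢ,uⱼ) ≤ 0. -/
import Mathlib


open Set

theorem stmt9 {X : Type*} (A B : Set X) (x₀ : X)
    (hU : A ∪ B = univ) (hI : A ∩ B = {x₀})
    (d₁ d₂ d : X → X → ℝ)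
    (h₁symm : ∀ x ∈ A, ∀ y ∈ A, d₁ x y = d₁ y x)
    (h₁nonneg : ∀ x ∈ A, ∀ y ∈ A, 0 ≤ d₁ x y)
    (h₁zero : ∀ x ∈ A, ∀ y ∈ A, (d₁ x y = 0 ↔ x = y))
    (h₂symm : ∀ x ∈ B, ∀ y ∈ B, d₂ x y = d₂ y x)
    (h₂nonneg : ∀ x ∈ B, ∀ y ∈ B, 0 ≤ d₂ x y)
    (h₂zero : ∀ x ∈ B, ∀ y ∈ B, (d₂ x y = 0 ↔ x = y))
    -- `d` is the 1-sum of `(A, d₁)` and `(B, d₂)`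
    (hdA : ∀ x ∈ A, ∀ y ∈ A, d x y = d₁ x y)
    (hdB : ∀ x ∈ B, ∀ y ∈ B, d x y = d₂ x y)
    (hdAB : ∀ x ∈ A, ∀ y ∈ B, x ∉ B → y ∉ A →
      d x y = d₁ x x₀ + d₂ x₀ y ∧ d y x = d₁ x x₀ + d₂ x₀ y)
    -- `d₁` and `d₂` are of negative type on `A` and `B` respectively
    (h₁neg : ∀ (n : ℕ) (u : Fin n → X), (∀ i, u i ∈ A) → ∀ c : Fin n → ℝ,
      (∑ i, c i) = 0 → ∑ i, ∑ j, c i * c j * d₁ (u i) (u j) ≤ 0)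
    (h₂neg : ∀ (n : ℕ) (u : Fin n → X), (∀ i, u i ∈ B) → ∀ c : Fin n → ℝ,
      (∑ i, c i) = 0 → ∑ i, ∑ j, c i * c j * d₂ (u i) (u j) ≤ 0)
    (n : ℕ) (u : Fin n → X) (c : Fin n → ℝ) (hc : (∑ i, c i) = 0) :
    ∑ i, ∑ j, c i * c j * d (u i) (u j) ≤ 0 := by
  classical
  have hx₀ : x₀ ∈ A ∩ B := by rw [hI]; rfl
  have hx₀A : x₀ ∈ A := hx₀.1
  have hx₀B : x₀ ∈ B := hx₀.2
  have hd₁x₀ : d₁ x₀ x₀ = 0 := (h₁zero x₀ hx₀A x₀ hx₀A).2 rfl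
  have hmemB : ∀ x : X, x ∉ A → x ∈ B := fun x hx => by
    have hx' : x ∈ A ∪ B := by rw [hU]; exact mem_univ x
    exact hx'.resolve_left hx
  set a : Fin n → ℝ := fun i => if u i ∈ A then c i else 0 with ha
  set e : Fin n → ℝ := fun i => if u i ∈ A then 0 else c i with he
  set pA : Fin n → X := fun i => if u i ∈ A then u i else x₀ with hpA
  set pB : Fin n → X := fun i => if u i ∈ A then x₀ else u i with hpB
  have hpAA : ∀ i, pA i ∈ A := fun i => by
    by_cases hi : u i ∈ A <;> simp [hpA, hi, hx₀A]
  have hpBB : ∀ i, pB i ∈ B := fun i => by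
    by_cases hi : u i ∈ A
    · simp [hpB, hi, hx₀B]
    · simpa [hpB, hi] using hmemB _ hi
  have key : ∀ i j, c i * c j * d (u i) (u j) =
      a i * a j * d₁ (pA i) (pA j) + e i * e j * d₂ (pB i) (pB j)
      + a i * e j * (d₁ (pA i) x₀ + d₂ x₀ (pB j))
      + e i * a j * (d₁ (pA j) x₀ + d₂ x₀ (pB i)) := by
    intro i j
    by_cases hi : u i ∈ A
    · by_cases hj : u j ∈ A
      · simp only [ha, he, hpA, hpB, hi, hj, if_true, if_false, if_pos, if_neg,
          not_false_iff, mul_zero, zero_mul, add_zero, zero_add]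
        rw [hdA _ hi _ hj] <;> try ring
      · simp only [ha, he, hpA, hpB, hi, hj, if_true, if_false, if_pos, if_neg,
          not_false_iff, mul_zero, zero_mul, add_zero, zero_add]
        by_cases hiB : u i ∈ B
        · have hix : u i = x₀ := by
            have h' : u i ∈ A ∩ B := ⟨hi, hiB⟩
            rw [hI] at h'; exact h'
          rw [hix, hdB _ hx₀B _ (hmemB _ hj), hd₁x₀] <;> try ring
        · rw [(hdAB _ hi _ (hmemB _ hj) hiB hj).1] <;> try ring
    · by_cases hj : u j ∈ A
      · simp only [ha, he, hpA, hpB, hi, hj, if_true, if_false, if_pos, if_neg,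
          not_false_iff, mul_zero, zero_mul, add_zero, zero_add]
        by_cases hjB : u j ∈ B
        · have hjx : u j = x₀ := by
            have h' : u j ∈ A ∩ B := ⟨hj, hjB⟩
            rw [hI] at h'; exact h'
          rw [hjx, hdB _ (hmemB _ hi) _ hx₀B, h₂symm _ (hmemB _ hi) _ hx₀B, hd₁x₀] <;> try ring
        · rw [(hdAB _ hj _ (hmemB _ hi) hjB hi).2] <;> try ring
      · simp only [ha, he, hpA, hpB, hi, hj, if_true, if_false, if_pos, if_neg,
          not_false_iff, mul_zero, zero_mul, add_zero, zero_add]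
        rw [hdB _ (hmemB _ hi) _ (hmemB _ hj)] <;> try ring
  set DA := ∑ i, ∑ j, a i * a j * d₁ (pA i) (pA j) with hDA
  set DB := ∑ i, ∑ j, e i * e j * d₂ (pB i) (pB j) with hDB
  set TA := ∑ i, a i * d₁ (pA i) x₀ with hTA
  set TB := ∑ i, e i * d₂ x₀ (pB i) with hTB
  set sA := ∑ i, a i with hsA
  set sE := ∑ i, e i with hsE
  have hsum : sE + sA = 0 := by
    rw [hsA, hsE, ← Finset.sum_add_distrib, ← hc]
    exact Finset.sum_congr rfl fun i _ => by
      by_cases hi : u i ∈ A <;> simp [ha, he, hi]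
  have cross1 : (∑ i, ∑ j, a i * e j * (d₁ (pA i) x₀ + d₂ x₀ (pB j)))
      = TA * sE + sA * TB := by
    rw [hTA, hsE, hsA, hTB, Finset.sum_mul_sum, Finset.sum_mul_sum,
      ← Finset.sum_add_distrib]
    exact Finset.sum_congr rfl fun i _ => by
      rw [← Finset.sum_add_distrib]
      exact Finset.sum_congr rfl fun j _ => by ring
  have cross2 : (∑ i, ∑ j, e i * a j * (d₁ (pA j) x₀ + d₂ x₀ (pB i)))
      = sE * TA + TB * sA := by
    rw [hTA, hsE, hsA, hTB, Finset.sum_mul_sum, Finset.sum_mul_sum,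
      ← Finset.sum_add_distrib]
    exact Finset.sum_congr rfl fun i _ => by
      rw [← Finset.sum_add_distrib]
      exact Finset.sum_congr rfl fun j _ => by ring
  have hL : (∑ i, ∑ j, c i * c j * d (u i) (u j))
      = DA + DB + (TA * sE + sA * TB) + (sE * TA + TB * sA) := by
    rw [← cross1, ← cross2, hDA, hDB]
    simp only [← Finset.sum_add_distrib]
    exact Finset.sum_congr rfl fun i _ => Finset.sum_congr rfl fun j _ => key i j
  -- apply negative type to the augmented systems
  have hwA : ∀ i : Fin (n+1), (Fin.cons x₀ pA : Fin (n+1) → X) i ∈ A := by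
    intro i
    refine Fin.cases ?_ ?_ i
    · simpa using hx₀A
    · intro i; simpa using hpAA i
  have hwB : ∀ i : Fin (n+1), (Fin.cons x₀ pB : Fin (n+1) → X) i ∈ B := by
    intro i
    refine Fin.cases ?_ ?_ i
    · simpa using hx₀B
    · intro i; simpa using hpBB i
  have hbA : (∑ i, (Fin.cons sE a : Fin (n+1) → ℝ) i) = 0 := by
    rw [Fin.sum_cons]; exact hsum
  have hbB : (∑ i, (Fin.cons sA e : Fin (n+1) → ℝ) i) = 0 := by
    rw [Fin.sum_cons]; linarith [hsum]
  have hS1 := h₁neg (n+1) (Fin.cons x₀ pA) hwA (Fin.cons sE a) hbA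
  have hS2 := h₂neg (n+1) (Fin.cons x₀ pB) hwB (Fin.cons sA e) hbB
  have hS1eq : (∑ i, ∑ j, (Fin.cons sE a : Fin (n+1) → ℝ) i *
        (Fin.cons sE a : Fin (n+1) → ℝ) j *
        d₁ ((Fin.cons x₀ pA : Fin (n+1) → X) i) ((Fin.cons x₀ pA : Fin (n+1) → X) j))
      = DA + sE * TA + TA * sE := by
    simp only [Fin.sum_univ_succ, Fin.cons_zero, Fin.cons_succ]
    have e1 : ∑ j, sE * a j * d₁ x₀ (pA j) = sE * TA := by
      rw [hTA, Finset.mul_sum]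
      exact Finset.sum_congr rfl fun j _ => by
        rw [h₁symm x₀ hx₀A (pA j) (hpAA j)] <;> try ring
    have e2 : ∑ i, (a i * sE * d₁ (pA i) x₀ + ∑ j, a i * a j * d₁ (pA i) (pA j))
        = TA * sE + DA := by
      rw [Finset.sum_add_distrib, hDA, hTA, Finset.sum_mul]
      congr 1
      exact Finset.sum_congr rfl fun i _ => by ring
    rw [e1, e2, hd₁x₀] <;> try ring
  have hS2eq : (∑ i, ∑ j, (Fin.cons sA e : Fin (n+1) → ℝ) i *
        (Fin.cons sA e : Fin (n+1) → ℝ) j *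
        d₂ ((Fin.cons x₀ pB : Fin (n+1) → X) i) ((Fin.cons x₀ pB : Fin (n+1) → X) j))
      = DB + sA * TB + TB * sA := by
    simp only [Fin.sum_univ_succ, Fin.cons_zero, Fin.cons_succ]
    have e1 : ∑ j, sA * e j * d₂ x₀ (pB j) = sA * TB := by
      rw [hTB, Finset.mul_sum]
      exact Finset.sum_congr rfl fun j _ => by ring
    have e2 : ∑ i, (e i * sA * d₂ (pB i) x₀ + ∑ j, e i * e j * d₂ (pB i) (pB j))
        = TB * sA + DB := by
      rw [Finset.sum_add_distrib, hDB, hTB, Finset.sum_mul]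
      congr 1
      exact Finset.sum_congr rfl fun i _ => by
        rw [h₂symm x₀ hx₀B (pB i) (hpBB i)] <;> try ring
    rw [e1, e2, (h₂zero x₀ hx₀B x₀ hx₀B).2 rfl] <;> try ring
  rw [hS1eq] at hS1
  rw [hS2eq] at hS2
  rw [hL]
  linarith
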